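/- The function $f(z,w) = (w+1)\log(z-1)$ on the bidisc $\mathbf{D}^2$ (with a fixed branch of $\log$ on $\mathbf{D} - 1$) satisfies $\sup_{(z,w)\in\mathbf{D}^2} (1 - \max(|z|,|w|)^2)\left(|\partial f/\partial z(z,w)| + |\partial f/\partial w(z,w)|\right) < \infty$, i.e. $f$ belongs to the natural Bloch space of the bidisc. -/

import Mathlib

open Metric Set

/-- The function `f(z,w) = (w+1) log (z-1)` has finite natural Bloch seminorm on
the bidisc. -/
theorem nat_bloch_of_example :
    ∃ M : ℝ, ∀ z w : ℂ, ‖z‖ < 1 → ‖w‖ < 1 →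
      (1 - (max ‖z‖ ‖w‖) ^ 2) *
        (‖(w + 1) / (z - 1)‖ + ‖Complex.log (z - 1)‖) ≤ M := by
  refine ⟨4 + (Real.log 2 + 2 + Real.pi), fun z w hz hw => ?_⟩
  have hz0 : (0:ℝ) ≤ ‖z‖ := norm_nonneg z
  have hw0 : (0:ℝ) ≤ ‖w‖ := norm_nonneg w
  have ht : 1 - ‖z‖ ≤ ‖z - 1‖ := by
    calc 1 - ‖z‖ = ‖(1:ℂ)‖ - ‖z‖ := by simp
    _ ≤ ‖(1:ℂ) - z‖ := norm_sub_norm_le _ _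
    _ = ‖z - 1‖ := by rw [norm_sub_rev]
  have htpos : 0 < ‖z - 1‖ := lt_of_lt_of_le (by linarith) ht
  have ht2 : ‖z - 1‖ ≤ 2 := by
    calc ‖z - 1‖ ≤ ‖z‖ + ‖(1:ℂ)‖ := norm_sub_le _ _
    _ ≤ 2 := by rw [norm_one]; linarith
  set t := ‖z - 1‖ with htdef
  set A := 1 - (max ‖z‖ ‖w‖) ^ 2 with hAdef
  have hm : ‖z‖ ≤ max ‖z‖ ‖w‖ := le_max_left _ _
  have hm1 : max ‖z‖ ‖w‖ < 1 := max_lt hz hw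
  have hm0 : 0 ≤ max ‖z‖ ‖w‖ := le_trans hz0 hm
  have hA0 : 0 ≤ A := by nlinarith
  have hA1 : A ≤ 1 := by nlinarith
  have hAt : A ≤ 2 * t := by nlinarith
  -- first term
  have h1 : A * ‖(w + 1) / (z - 1)‖ ≤ 4 := by
    rw [norm_div]
    have hn : ‖w + 1‖ ≤ 2 := by
      calc ‖w + 1‖ ≤ ‖w‖ + ‖(1:ℂ)‖ := norm_add_le _ _
      _ ≤ 2 := by rw [norm_one]; linarith
    have hn0 : 0 ≤ ‖w + 1‖ := norm_nonneg _
    rw [← mul_div_assoc, div_le_iff₀ htpos]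
    nlinarith [mul_le_mul hAt hn hn0 (by linarith : (0:ℝ) ≤ 2 * t)]
  -- second term
  have hlog : ‖Complex.log (z - 1)‖ ≤ |Real.log t| + Real.pi := by
    refine (Complex.norm_le_abs_re_add_abs_im _).trans ?_
    rw [Complex.log_re, Complex.log_im]
    have : ‖z - 1‖ = t := rfl
    rw [this]
    have := Complex.abs_arg_le_pi (z - 1)
    linarith
  have h2 : A * |Real.log t| ≤ Real.log 2 + 2 := by
    rcases le_or_gt 1 t with h | h
    · have hl0 : 0 ≤ Real.log t := Real.log_nonneg h
      rw [abs_of_nonneg hl0]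
      have hl2 : Real.log t ≤ Real.log 2 := Real.log_le_log (by linarith) ht2
      nlinarith
    · have hl0 : Real.log t < 0 := Real.log_neg htpos h
      rw [abs_of_neg hl0]
      have key : Real.log (1 / t) ≤ 1 / t - 1 := Real.log_le_sub_one_of_pos (by positivity)
      rw [Real.log_div one_ne_zero (ne_of_gt htpos), Real.log_one] at key
      have h1t : t * (1 / t) = 1 := by field_simp
      have htL : t * (-Real.log t) ≤ 1 - t := by
        nlinarith [mul_le_mul_of_nonneg_left key (le_of_lt htpos)]
      nlinarith [mul_nonneg (by linarith : (0:ℝ) ≤ 2 * t - A) (by linarith : (0:ℝ) ≤ -Real.log t),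
        Real.log_nonneg one_le_two]
  have hpi : 0 ≤ Real.pi := Real.pi_nonneg
  have h3 : A * ‖Complex.log (z - 1)‖ ≤ Real.log 2 + 2 + Real.pi := by
    calc A * ‖Complex.log (z - 1)‖ ≤ A * (|Real.log t| + Real.pi) :=
          mul_le_mul_of_nonneg_left hlog hA0
    _ = A * |Real.log t| + A * Real.pi := by ring
    _ ≤ Real.log 2 + 2 + Real.pi := by nlinarith
  calc A * (‖(w + 1) / (z - 1)‖ + ‖Complex.log (z - 1)‖)
      = A * ‖(w + 1) / (z - 1)‖ + A * ‖Complex.log (z - 1)‖ := by ring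
    _ ≤ 4 + (Real.log 2 + 2 + Real.pi) := add_le_add h1 h3
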